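/- Let P be a probability measure, 𝒬 a family of probability measures, and T a nonnegative statistic with E^P[T(X)] < 1 and sup_{Q ∈ 𝒬} E^Q[T(X)] < ∞; assume additionally that for each Q ∈ 𝒬, 0 < E^Q[T(X)] and log T(X) is integrable under Q. Let Y^{(1)}, Y^{(2)}, ... be i.i.d. from P independent of X, with E[T̃] := E^P[T(Y^{(1)})] = E^P[T(X)], and suppose for each Q ∈ 𝒬 and each M the variable T(X)/(M+1) + Σ_{m=1}^M T(Y^{(m)})/(M+1) is not almost surely constant under Q. Then there exists M_* ∈ ℕ such that for all Q ∈ 𝒬 and all M ≥ M_*, the Besag-Clifford e-value Ê_M(X) = (M+1)·T(X) / (T(X) + Σ_{m=1}^M T(Y^{(m)})) satisfies E^Q[log Ê_M(X)] > E^Q[log T(X)]. -/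

import Mathlib

open MeasureTheory ProbabilityTheory Filter Finset

lemma map_eval_pi {n M : ℕ} (P : Measure (Fin n → ℝ)) [IsProbabilityMeasure P] (m : Fin M) :
    Measure.map (fun y : Fin M → (Fin n → ℝ) => y m) (Measure.pi fun _ : Fin M => P) = P := by
  ext s hs
  rw [Measure.map_apply (measurable_pi_apply m) hs]
  have : (fun y : Fin M → (Fin n → ℝ) => y m) ⁻¹' s
      = Set.pi Set.univ (Function.update (fun _ : Fin M => Set.univ) m s) := by
    exact Set.eval_preimage
  rw [this, Measure.pi_pi]
  rw [Finset.prod_eq_single m]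
  · simp
  · intro j _ hj; simp [Function.update_of_ne hj]
  · simp

/-- **Corollary 1, item 2: uniform e-power domination.**
Let `P` be a probability measure, `𝒬` a family of probability measures, and `T`
nonnegative with `E^P[T(X)] < 1` and `sup_{Q ∈ 𝒬} E^Q[T(X)] < ∞`; assume for each
`Q ∈ 𝒬` that `0 < E^Q[T(X)]` and `log T(X)` is integrable under `Q`. Let
`Y⁽¹⁾, Y⁽²⁾, …` be i.i.d. from `P`, independent of `X` (encoded via the product
measure `Q ⊗ P^{⊗M}`), with `E[T̃] = E^P[T]`, and suppose for each `Q ∈ 𝒬` and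
each `M` the denominator is not a.s. constant. Then there exists `M_* ∈ ℕ` such
that for all `Q ∈ 𝒬` and all `M ≥ M_*`,
`E^Q[log Ê_M(X)] > E^Q[log T(X)]`. -/
theorem besag_clifford_epower_uniform
    {n : ℕ}
    (P : Measure (Fin n → ℝ)) [IsProbabilityMeasure P]
    (𝒬 : Set (Measure (Fin n → ℝ))) (h𝒬prob : ∀ Q ∈ 𝒬, IsProbabilityMeasure Q)
    (T : (Fin n → ℝ) → ℝ) (hT : Measurable T) (hT0 : ∀ x, 0 ≤ T x)
    (hTint_P : Integrable T P)
    (hTint_Q : ∀ Q ∈ 𝒬, Integrable T Q)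
    -- `E[T̃] = E^P[T] < 1`, with `0 < E^P[T]`
    (hTP : ∫ x, T x ∂P < 1) (hTPpos : 0 < ∫ x, T x ∂P)
    -- `sup_{Q ∈ 𝒬} E^Q[T(X)] < ∞`
    (C : ℝ) (hsup : ∀ Q ∈ 𝒬, ∫ x, T x ∂Q ≤ C)
    -- for each `Q ∈ 𝒬`: `0 < E^Q[T]` and `log T(X)` is integrable under `Q`
    (hTQpos : ∀ Q ∈ 𝒬, 0 < ∫ x, T x ∂Q)
    (hTposQ : ∀ Q ∈ 𝒬, ∀ᵐ x ∂Q, 0 < T x)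
    (hlogTint : ∀ Q ∈ 𝒬, Integrable (fun x => Real.log (T x)) Q)
    (hlogDint : ∀ Q ∈ 𝒬, ∀ M : ℕ, Integrable
      (fun z : (Fin n → ℝ) × (Fin M → (Fin n → ℝ)) =>
        Real.log (T z.1 / ((M : ℝ) + 1) + ∑ m : Fin M, T (z.2 m) / ((M : ℝ) + 1)))
      (Q.prod (Measure.pi fun _ : Fin M => P)))
    (hnondeg : ∀ Q ∈ 𝒬, ∀ M : ℕ, ¬ ∃ r : ℝ,
      (fun z : (Fin n → ℝ) × (Fin M → (Fin n → ℝ)) =>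
          T z.1 / ((M : ℝ) + 1) + ∑ m : Fin M, T (z.2 m) / ((M : ℝ) + 1))
        =ᵐ[Q.prod (Measure.pi fun _ : Fin M => P)] fun _ => r) :
    ∃ Mstar : ℕ, ∀ Q ∈ 𝒬, ∀ M : ℕ, Mstar ≤ M →
      (∫ z : (Fin n → ℝ) × (Fin M → (Fin n → ℝ)),
          Real.log (((M : ℝ) + 1) * T z.1 / (T z.1 + ∑ m : Fin M, T (z.2 m)))
        ∂(Q.prod (Measure.pi fun _ : Fin M => P)))
      > ∫ x, Real.log (T x) ∂Q := by
  set p : ℝ := ∫ x, T x ∂P with hp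
  have hp1 : (0:ℝ) < 1 - p := by linarith
  refine ⟨⌈(C - 1) / (1 - p)⌉₊, ?_⟩
  intro Q hQ M hM
  haveI hQprob : IsProbabilityMeasure Q := h𝒬prob Q hQ
  set π : Measure (Fin M → (Fin n → ℝ)) := Measure.pi fun _ : Fin M => P with hπ
  haveI : IsProbabilityMeasure π := by rw [hπ]; infer_instance
  set μ : Measure ((Fin n → ℝ) × (Fin M → (Fin n → ℝ))) := Q.prod π with hμ
  haveI : IsProbabilityMeasure μ := by rw [hμ]; infer_instance
  set D : (Fin n → ℝ) × (Fin M → (Fin n → ℝ)) → ℝ :=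
    fun z => T z.1 / ((M : ℝ) + 1) + ∑ m : Fin M, T (z.2 m) / ((M : ℝ) + 1) with hD
  have hM1 : (0:ℝ) < (M : ℝ) + 1 := by positivity
  -- maps
  have hmapfst : Measure.map Prod.fst μ = Q := by
    rw [hμ, Measure.map_fst_prod]; simp
  have hmapeval : ∀ m : Fin M, Measure.map (fun z : (Fin n → ℝ) × (Fin M → (Fin n → ℝ)) => z.2 m) μ = P := by
    intro m
    have h1 : (fun z : (Fin n → ℝ) × (Fin M → (Fin n → ℝ)) => z.2 m)
        = (fun y : Fin M → (Fin n → ℝ) => y m) ∘ Prod.snd := rfl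
    rw [h1, ← Measure.map_map (measurable_pi_apply m) measurable_snd]
    rw [hμ, Measure.map_snd_prod]
    simp [hπ, map_eval_pi P m]
  -- integrability of coordinate compositions
  have hmeas2 : ∀ m : Fin M, Measurable fun z : (Fin n → ℝ) × (Fin M → (Fin n → ℝ)) => z.2 m :=
    fun m => (measurable_pi_apply m).comp measurable_snd
  have hint1 : Integrable (fun z : (Fin n → ℝ) × (Fin M → (Fin n → ℝ)) => T z.1) μ := by
    exact (integrable_map_measure hT.aestronglyMeasurable measurable_fst.aemeasurable).mp
      (by rw [hmapfst]; exact hTint_Q Q hQ)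
  have hint2 : ∀ m : Fin M, Integrable (fun z : (Fin n → ℝ) × (Fin M → (Fin n → ℝ)) => T (z.2 m)) μ := by
    intro m
    exact (integrable_map_measure hT.aestronglyMeasurable (hmeas2 m).aemeasurable).mp
      (by rw [hmapeval m]; exact hTint_P)
  -- integrals of coordinate compositions
  have hI1 : ∫ z, T z.1 ∂μ = ∫ x, T x ∂Q := by
    rw [← hmapfst, integral_map measurable_fst.aemeasurable
      (by rw [hmapfst]; exact hT.aestronglyMeasurable)]
  have hI2 : ∀ m : Fin M, (∫ z, T (z.2 m) ∂μ) = p := by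
    intro m
    rw [hp, ← hmapeval m, integral_map (hmeas2 m).aemeasurable
      (by rw [hmapeval m]; exact hT.aestronglyMeasurable)]
  -- positivity a.e.
  have hTpos : ∀ᵐ z ∂μ, 0 < T z.1 := by
    have h := hTposQ Q hQ
    rw [← hmapfst] at h
    exact (ae_map_iff measurable_fst.aemeasurable (measurableSet_lt measurable_const hT)).mp h
  have hDpos : ∀ᵐ z ∂μ, 0 < D z := by
    filter_upwards [hTpos] with z hz
    have hs : (0:ℝ) ≤ ∑ m : Fin M, T (z.2 m) / ((M : ℝ) + 1) :=
      Finset.sum_nonneg fun m _ => div_nonneg (hT0 _) hM1.le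
    have : 0 < T z.1 / ((M : ℝ) + 1) := div_pos hz hM1
    rw [hD]; dsimp only; linarith
  -- integrability of D
  have hDint : Integrable D μ := by
    rw [hD]
    exact (hint1.div_const _).add (integrable_finset_sum _ fun m _ => (hint2 m).div_const _)
  -- integral of D
  have hDI : ∫ z, D z ∂μ = (∫ x, T x ∂Q) / ((M : ℝ) + 1) + (M : ℝ) * p / ((M : ℝ) + 1) := by
    rw [hD]
    rw [integral_add (hint1.div_const _) (integrable_finset_sum _ fun m _ => (hint2 m).div_const _)]
    rw [integral_div, hI1, integral_finset_sum _ fun m _ => (hint2 m).div_const _]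
    simp_rw [integral_div]
    congr 1
    simp [hI2, Finset.sum_const, mul_div_assoc, mul_comm]
  -- bound on integral of D
  have hDI_le : ∫ z, D z ∂μ ≤ 1 := by
    rw [hDI]
    have hMC : (C - 1) / (1 - p) ≤ (M : ℝ) := by
      calc (C - 1) / (1 - p) ≤ (⌈(C - 1) / (1 - p)⌉₊ : ℝ) := Nat.le_ceil _
      _ ≤ (M : ℝ) := by exact_mod_cast hM
    have hC : C - 1 ≤ (M : ℝ) * (1 - p) := by
      rw [div_le_iff₀ hp1] at hMC; linarith
    have hQC : ∫ x, T x ∂Q ≤ C := hsup Q hQ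
    rw [← add_div, div_le_one hM1]
    nlinarith
  -- strict Jensen via exp
  have hlogD : Integrable (fun z => Real.log (D z)) μ := hlogDint Q hQ M
  have hjensen := strictConvexOn_exp.ae_eq_const_or_map_average_lt
    (Real.continuous_exp.continuousOn) isClosed_univ
    (Filter.Eventually.of_forall fun z => Set.mem_univ (Real.log (D z))) hlogD
    (by
      refine hDint.congr ?_
      filter_upwards [hDpos] with z hz
      simp [Function.comp, Real.exp_log hz])
  rcases hjensen with hconst | hlt
  · -- D is a.e. constant: contradiction
    exfalso
    apply hnondeg Q hQ M
    refine ⟨Real.exp (⨍ z, Real.log (D z) ∂μ), ?_⟩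
    filter_upwards [hconst, hDpos] with z hz hzpos
    have : Real.log (D z) = ⨍ z, Real.log (D z) ∂μ := hz
    rw [← this, Real.exp_log hzpos]
  · -- strict inequality: exp (E[log D]) < E[D] ≤ 1, so E[log D] < 0
    have havg1 : (⨍ z, Real.log (D z) ∂μ) = ∫ z, Real.log (D z) ∂μ := by
      exact average_eq_integral _ _
    have havg2 : (⨍ z, Real.exp (Real.log (D z)) ∂μ) = ∫ z, D z ∂μ := by
      rw [average_eq_integral]
      refine integral_congr_ae ?_
      filter_upwards [hDpos] with z hz
      rw [Real.exp_log hz]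
    rw [havg1] at hlt
    have hlt2 : Real.exp (∫ z, Real.log (D z) ∂μ) < ∫ z, D z ∂μ := by
      calc Real.exp (∫ z, Real.log (D z) ∂μ) < ⨍ z, Real.exp (Real.log (D z)) ∂μ := hlt
      _ = ∫ z, D z ∂μ := havg2
    have hneg : ∫ z, Real.log (D z) ∂μ < 0 := by
      have : Real.exp (∫ z, Real.log (D z) ∂μ) < Real.exp 0 := by
        rw [Real.exp_zero]; exact lt_of_lt_of_le hlt2 hDI_le
      exact Real.exp_lt_exp.mp this
    -- rewrite target
    have hlogT1 : Integrable (fun z : (Fin n → ℝ) × (Fin M → (Fin n → ℝ)) => Real.log (T z.1)) μ := by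
      exact (integrable_map_measure (hT.log.aestronglyMeasurable)
        measurable_fst.aemeasurable).mp (by rw [hmapfst]; exact hlogTint Q hQ)
    have hIT : ∫ z, Real.log (T z.1) ∂μ = ∫ x, Real.log (T x) ∂Q := by
      rw [← hmapfst, integral_map measurable_fst.aemeasurable
        (by rw [hmapfst]; exact hT.log.aestronglyMeasurable)]
    have hrw : (∫ z : (Fin n → ℝ) × (Fin M → (Fin n → ℝ)),
          Real.log (((M : ℝ) + 1) * T z.1 / (T z.1 + ∑ m : Fin M, T (z.2 m))) ∂μ)
        = ∫ z, (Real.log (T z.1) - Real.log (D z)) ∂μ := by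
      refine integral_congr_ae ?_
      filter_upwards [hTpos, hDpos] with z hz hDz
      have hsum : D z = (T z.1 + ∑ m : Fin M, T (z.2 m)) / ((M : ℝ) + 1) := by
        rw [hD]; dsimp only; rw [← Finset.sum_div, ← add_div]
      have hden : 0 < T z.1 + ∑ m : Fin M, T (z.2 m) := by
        have := hDz; rw [hsum] at this
        exact (div_pos_iff.mp this).resolve_right (fun h => absurd h.2 (not_lt.mpr hM1.le)) |>.1
      have heq : ((M : ℝ) + 1) * T z.1 / (T z.1 + ∑ m : Fin M, T (z.2 m)) = T z.1 / D z := by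
        rw [hsum, div_div_eq_mul_div, mul_comm, mul_div_assoc]
      rw [heq, Real.log_div (ne_of_gt hz) (ne_of_gt hDz)]
    rw [hrw, integral_sub hlogT1 hlogD, hIT]
    linarith
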